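/- In the roundabout exploration model, for every t ∈ [N], no two active agents are in the same state after step t: for all distinct agents a_i, a_j ∈ A(t), s_i(t) ≠ s_j(t). -/

import Mathlib

/-- The circular interval `⟨i, j⟩` on `Fin N`: all states encountered when moving
forward from `i` to `j` along the cycle `(0, 1, …, N-1, 0)`. -/
def cInt {N : ℕ} (i j : Fin N) : Set (Fin N) := {x | (x - i).val ≤ (j - i).val}

/-- The half-open circular interval `⟨i, j)` on `Fin N`, which excludes the right
endpoint `j`. -/
def cIntHalf {N : ℕ} (i j : Fin N) : Set (Fin N) := cInt i j \ {j}

/-- The roundabout exploration model on the state set `Fin N`: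
`avail t` is the set of positions available at step `t` (steps `t = 1, …, N` are
relevant), `state i t` is the state of agent `a_i` after step `t`, and `active t`
is the set of (indices of) active agents after step `t`. Agent `a_i` starts at
state `i`, moves forward one position (cyclically) at step `t` whenever its
current position is available, and stays put otherwise. Active agents satisfy:
initially all agents are active, the active sets are decreasing, elimination
preserves coverage of visited states, and every active agent is non-redundant. -/
structure Roundabout (N : ℕ) [NeZero N] where
  avail : ℕ → Set (Fin N)
  state : Fin N → ℕ → Fin N
  active : ℕ → Set (Fin N)
  state_zero : ∀ i, state i 0 = i
  state_succ_of_mem : ∀ i t, state i t ∈ avail (t + 1) → state i (t + 1) = state i t + 1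
  state_succ_of_not_mem : ∀ i t, state i t ∉ avail (t + 1) → state i (t + 1) = state i t
  active_zero : active 0 = Set.univ
  active_mono : ∀ t, active (t + 1) ⊆ active t
  active_cover : ∀ t, (⋃ j ∈ active (t + 1), cInt j (state j (t + 1)))
      = ⋃ j ∈ active t, cInt j (state j (t + 1))
  active_nonredundant : ∀ t, ∀ i ∈ active (t + 1),
      ¬ cInt i (state i (t + 1)) ⊆ ⋃ j ∈ active (t + 1) \ {i}, cInt j (state j (t + 1))

/-- `D_i(t)`, the set of states visited by agent `a_i` up to step `t`. -/
def Roundabout.visited {N : ℕ} [NeZero N] (R : Roundabout N) (i : Fin N) (t : ℕ) :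
    Set (Fin N) := cInt i (R.state i t)

/-- The roundabout model is `k`-deficient: at every step `t ∈ [N]`, at most `2k`
positions are unavailable. -/
def Roundabout.KDeficient {N : ℕ} [NeZero N] (R : Roundabout N) (k : ℕ) : Prop :=
  ∀ t : ℕ, 1 ≤ t → t ≤ N → ((R.avail t)ᶜ : Set (Fin N)).ncard ≤ 2 * k

lemma cInt_subset_of_mem {N : ℕ} [NeZero N] (i j q : Fin N)
    (h : (j - i).val ≤ (q - i).val) : cInt j q ⊆ cInt i q := by
  have hcab : (q - j).val + (j - i).val = (q - i).val := by
    have key : (q - i) = (q - j) + (j - i) := by abel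
    have hval : (q - i).val = ((q - j).val + (j - i).val) % N := by
      rw [key, Fin.val_add]
    rcases Nat.lt_or_ge ((q - j).val + (j - i).val) N with h1 | h1
    · rw [Nat.mod_eq_of_lt h1] at hval; omega
    · exfalso
      have hm : ((q - j).val + (j - i).val) % N
          = (q - j).val + (j - i).val - N := by
        rw [Nat.mod_eq_sub_mod h1, Nat.mod_eq_of_lt]
        have := (q - j).isLt
        have := (j - i).isLt
        omega
      rw [hm] at hval
      have := (q - j).isLt
      omega
  intro x hx
  simp only [cInt, Set.mem_setOf_eq] at hx ⊢
  have key : (x - i) = (x - j) + (j - i) := by abel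
  have hval : (x - i).val = ((x - j).val + (j - i).val) % N := by
    rw [key, Fin.val_add]
  have hb : (q - i).val < N := (q - i).isLt
  rw [hval, Nat.mod_eq_of_lt (by omega)]
  omega

lemma cInt_dichotomy {N : ℕ} [NeZero N] (i j q : Fin N) (hij : i ≠ j) :
    (j - i).val ≤ (q - i).val ∨ (i - j).val ≤ (q - j).val := by
  by_contra hc
  push_neg at hc
  obtain ⟨h1, h2⟩ := hc
  have hji : (j - i) ≠ 0 := fun h0 => hij (sub_eq_zero.mp h0).symm
  have ha : 0 < (j - i).val :=
    Nat.pos_of_ne_zero (fun h => hji (Fin.ext h))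
  have hsum : (i - j) + (j - i) = 0 := by abel
  have hval0 : ((i - j).val + (j - i).val) % N = 0 := by
    rw [← Fin.val_add, hsum]; rfl
  have hNij : (i - j).val = N - (j - i).val := by
    have := (i - j).isLt
    have := (j - i).isLt
    rcases Nat.lt_or_ge ((i - j).val + (j - i).val) N with h | h
    · rw [Nat.mod_eq_of_lt h] at hval0; omega
    · have hm : ((i - j).val + (j - i).val) % N
          = (i - j).val + (j - i).val - N := by
        rw [Nat.mod_eq_sub_mod h, Nat.mod_eq_of_lt]; omega
      rw [hm] at hval0; omega
  -- q - i = (q - j) + (j - i)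
  have key : (q - i) = (q - j) + (j - i) := by abel
  have hval : (q - i).val = ((q - j).val + (j - i).val) % N := by
    rw [key, Fin.val_add]
  have hc2 : (q - j).val + (j - i).val < N := by omega
  rw [Nat.mod_eq_of_lt hc2] at hval
  omega

/-- **Lemma (distinct states).** For every `t ∈ [N]`, no two active agents are in the
same state after step `t`. -/
theorem roundabout_distinct_states {N : ℕ} [NeZero N] (R : Roundabout N)
    (t : ℕ) (ht1 : 1 ≤ t) (ht : t ≤ N)
    (i j : Fin N) (hi : i ∈ R.active t) (hj : j ∈ R.active t) (hij : i ≠ j) :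
    R.state i t ≠ R.state j t := by
  intro heq
  obtain ⟨t', rfl⟩ : ∃ t', t = t' + 1 := ⟨t - 1, by omega⟩
  rcases cInt_dichotomy i j (R.state i (t' + 1)) hij with h | h
  · -- cInt j q ⊆ cInt i q, contradicting nonredundancy of j
    apply R.active_nonredundant t' j hj
    intro x hx
    rw [← heq] at hx
    have hx' : x ∈ cInt i (R.state i (t' + 1)) := cInt_subset_of_mem i j _ h hx
    refine Set.mem_biUnion (show i ∈ R.active (t' + 1) \ {j} from ⟨hi, ?_⟩) hx'
    simpa using hij
  · apply R.active_nonredundant t' i hi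
    intro x hx
    have hx' : x ∈ cInt j (R.state j (t' + 1)) := by
      rw [← heq]
      exact cInt_subset_of_mem j i _ (heq ▸ h) hx
    refine Set.mem_biUnion (show j ∈ R.active (t' + 1) \ {i} from ⟨hj, ?_⟩) hx'
    simpa using hij.symm
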